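/- Let (R,H) be a commutative Hopf algebroid over a field k and x : R → k a k-algebra character. Then the base-changed k-algebra k_x ⊗_R H ⊗_R k_x (where the left R-action on H is via t and the right via s) carries a natural structure of commutative Hopf k-algebra, with unit induced by the unit of H, multiplication from H, counit h ↦ x(ε(h)), comultiplication induced by Δ, and antipode induced by S. -/

import Mathlib

/-- A commutative Hopf algebroid `(R, H)` over a field (or commutative ring) `k`.
The comultiplication is encoded universally: `H2` plays the role of `H ⊗_R H`
(`H` as an `R`-bimodule via the target `t` on the left and the source `s` on the right),
presented by the two canonical algebra maps `i₁, i₂ : H → H2` (`h ↦ h ⊗ 1`, `h ↦ 1 ⊗ h`)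
satisfying `i₁ ∘ s = i₂ ∘ t` together with its universal property: algebra maps out of
`H2` correspond to pairs `(g, f)` of algebra maps out of `H` with `g ∘ s = f ∘ t`.
With this encoding `lift g f ∘ Δ` is the convolution `h ↦ Σ g(h₁) f(h₂)`. -/
structure CommHopfAlgebroid (k R H : Type) [CommRing k] [CommRing R] [CommRing H]
    [Algebra k R] [Algebra k H] where
  /-- the source -/
  s : R →ₐ[k] H
  /-- the target -/
  t : R →ₐ[k] H
  /-- the counit -/
  ε : H →ₐ[k] R
  counit_s : ε.comp s = AlgHom.id k R
  counit_t : ε.comp t = AlgHom.id k R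
  /-- the carrier of `H ⊗_R H` -/
  H2 : Type
  [h2ring : CommRing H2]
  [h2alg : Algebra k H2]
  i₁ : H →ₐ[k] H2
  i₂ : H →ₐ[k] H2
  compat : i₁.comp s = i₂.comp t
  /-- universal property of `H ⊗_R H`: pairs `(g,f)` with `g ∘ s = f ∘ t` lift -/
  lift : ∀ {A : Type} [CommRing A] [Algebra k A] (g f : H →ₐ[k] A),
      g.comp s = f.comp t → (H2 →ₐ[k] A)
  lift_comp_i₁ : ∀ {A : Type} [CommRing A] [Algebra k A] (g f : H →ₐ[k] A)
      (hgf : g.comp s = f.comp t), (lift g f hgf).comp i₁ = g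
  lift_comp_i₂ : ∀ {A : Type} [CommRing A] [Algebra k A] (g f : H →ₐ[k] A)
      (hgf : g.comp s = f.comp t), (lift g f hgf).comp i₂ = f
  lift_unique : ∀ {A : Type} [CommRing A] [Algebra k A] (g f : H →ₐ[k] A)
      (hgf : g.comp s = f.comp t) (u : H2 →ₐ[k] A),
      u.comp i₁ = g → u.comp i₂ = f → u = lift g f hgf
  /-- the comultiplication `Δ : H → H ⊗_R H` -/
  Δ : H →ₐ[k] H2
  Δ_comp_t : Δ.comp t = i₁.comp t
  Δ_comp_s : Δ.comp s = i₂.comp s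
  /-- coassociativity, tested on points in any commutative `k`-algebra `A` -/
  coassoc : ∀ {A : Type} [CommRing A] [Algebra k A] (u v w : H →ₐ[k] A)
      (huv : u.comp s = v.comp t) (hvw : v.comp s = w.comp t)
      (h₁ : ((lift u v huv).comp Δ).comp s = w.comp t)
      (h₂ : u.comp s = ((lift v w hvw).comp Δ).comp t),
      (lift ((lift u v huv).comp Δ) w h₁).comp Δ =
        (lift u ((lift v w hvw).comp Δ) h₂).comp Δ
  /-- left counit law: `t(ε(h₁)) h₂ = h` -/
  counit_left : ∀ (h : (t.comp ε).comp s = (AlgHom.id k H).comp t),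
      (lift (t.comp ε) (AlgHom.id k H) h).comp Δ = AlgHom.id k H
  /-- right counit law: `h₁ s(ε(h₂)) = h` -/
  counit_right : ∀ (h : (AlgHom.id k H).comp s = (s.comp ε).comp t),
      (lift (AlgHom.id k H) (s.comp ε) h).comp Δ = AlgHom.id k H
  /-- the antipode -/
  antipode : H →ₐ[k] H
  antipode_s : antipode.comp s = t
  antipode_t : antipode.comp t = s
  antipode_invol : antipode.comp antipode = AlgHom.id k H
  /-- antipode identity `m (S ⊗ id) Δ = s ∘ ε` -/
  antipode_left : ∀ (h : antipode.comp s = (AlgHom.id k H).comp t),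
      (lift antipode (AlgHom.id k H) h).comp Δ = s.comp ε
  /-- antipode identity `m (id ⊗ S) Δ = t ∘ ε` -/
  antipode_right : ∀ (h : (AlgHom.id k H).comp s = antipode.comp t),
      (lift (AlgHom.id k H) antipode h).comp Δ = t.comp ε

attribute [instance] CommHopfAlgebroid.h2ring CommHopfAlgebroid.h2alg

set_option maxHeartbeats 1000000 in
open Algebra.TensorProduct in
/-- Let `(R,H)` be a commutative Hopf algebroid over `k` and `x : R → k` a character.
Let `T` (together with `j : H → T`) present the base change `k_x ⊗_R H ⊗_R k_x`: `j`
coequalizes `s` and `t` against the `k`-point `x`, universally.  Then `T` carries a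
natural structure of commutative Hopf `k`-algebra: there are a comultiplication
`T → T ⊗_k T`, a counit `T → k` and an antipode `T → T` (all algebra maps) satisfying
the Hopf algebra axioms, induced respectively by `Δ`, `x ∘ ε` and `S`. -/
theorem stmt18 (k R H : Type) [Field k] [CommRing R] [CommRing H]
    [Algebra k R] [Algebra k H] (𝓗 : CommHopfAlgebroid k R H)
    (x : R →ₐ[k] k) (T : Type) [CommRing T] [Algebra k T] (j : H →ₐ[k] T)
    (hjs : j.comp 𝓗.s = (Algebra.ofId k T).comp x)
    (hjt : j.comp 𝓗.t = (Algebra.ofId k T).comp x)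
    (huniv : ∀ (A : Type) [CommRing A] [Algebra k A] (u : H →ₐ[k] A),
        u.comp 𝓗.s = (Algebra.ofId k A).comp x →
        u.comp 𝓗.t = (Algebra.ofId k A).comp x →
        ∃! w : T →ₐ[k] A, w.comp j = u) :
    ∃ (comul : T →ₐ[k] TensorProduct k T T) (counit : T →ₐ[k] k) (antip : T →ₐ[k] T),
      -- coassociativity
      ((Algebra.TensorProduct.assoc k k k T T T : _ ≃ₐ[k] _).toAlgHom.comp
          ((Algebra.TensorProduct.map comul (AlgHom.id k T)).comp comul) =
        (Algebra.TensorProduct.map (AlgHom.id k T) comul).comp comul) ∧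
      -- counit laws
      ((Algebra.TensorProduct.lid k T : _ ≃ₐ[k] _).toAlgHom.comp
          ((Algebra.TensorProduct.map counit (AlgHom.id k T)).comp comul) =
        AlgHom.id k T) ∧
      ((Algebra.TensorProduct.rid k k T : _ ≃ₐ[k] _).toAlgHom.comp
          ((Algebra.TensorProduct.map (AlgHom.id k T) counit).comp comul) =
        AlgHom.id k T) ∧
      -- antipode identities
      ((Algebra.TensorProduct.lmul' k).comp
          ((Algebra.TensorProduct.map antip (AlgHom.id k T)).comp comul) =
        (Algebra.ofId k T).comp counit) ∧
      ((Algebra.TensorProduct.lmul' k).comp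
          ((Algebra.TensorProduct.map (AlgHom.id k T) antip).comp comul) =
        (Algebra.ofId k T).comp counit) ∧
      -- the structure maps are induced by `ε`, `S` and `Δ`
      (counit.comp j = x.comp 𝓗.ε) ∧
      (antip.comp j = j.comp 𝓗.antipode) ∧
      (∀ hc : (Algebra.TensorProduct.includeLeft.comp j : H →ₐ[k] TensorProduct k T T).comp 𝓗.s
          = ((Algebra.TensorProduct.includeRight.restrictScalars k).comp j
              : H →ₐ[k] TensorProduct k T T).comp 𝓗.t,
        comul.comp j =
          (𝓗.lift (Algebra.TensorProduct.includeLeft.comp j)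
            ((Algebra.TensorProduct.includeRight.restrictScalars k).comp j) hc).comp
            𝓗.Δ) := by
  classical
  -- extensionality for maps out of `T`
  have Tj_ext : ∀ {A : Type} [CommRing A] [Algebra k A] (w₁ w₂ : T →ₐ[k] A),
      w₁.comp j = w₂.comp j → w₁ = w₂ := by
    intro A _ _ w₁ w₂ hw
    have hs : (w₁.comp j).comp 𝓗.s = (Algebra.ofId k A).comp x := by
      ext r
      have : j (𝓗.s r) = algebraMap k T (x r) := by
        simpa [Algebra.ofId_apply] using DFunLike.congr_fun hjs r
      simp [AlgHom.comp_apply, this, Algebra.ofId_apply]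
    have ht : (w₁.comp j).comp 𝓗.t = (Algebra.ofId k A).comp x := by
      ext r
      have : j (𝓗.t r) = algebraMap k T (x r) := by
        simpa [Algebra.ofId_apply] using DFunLike.congr_fun hjt r
      simp [AlgHom.comp_apply, this, Algebra.ofId_apply]
    obtain ⟨w, hw1, hw2⟩ := huniv A (w₁.comp j) hs ht
    exact (hw2 w₁ rfl).trans (hw2 w₂ hw.symm).symm
  -- extensionality for maps out of `H2`
  have H2_ext : ∀ {A : Type} [CommRing A] [Algebra k A] (u v : 𝓗.H2 →ₐ[k] A),
      u.comp 𝓗.i₁ = v.comp 𝓗.i₁ → u.comp 𝓗.i₂ = v.comp 𝓗.i₂ → u = v := by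
    intro A _ _ u v h1 h2
    have hc : (u.comp 𝓗.i₁).comp 𝓗.s = (u.comp 𝓗.i₂).comp 𝓗.t := by
      rw [AlgHom.comp_assoc, AlgHom.comp_assoc, 𝓗.compat]
    rw [𝓗.lift_unique _ _ hc u rfl rfl, 𝓗.lift_unique _ _ hc v h1.symm h2.symm]
  -- for any algebra map `φ : T → A`, `(φ ∘ j) ∘ s = ofId ∘ x = (φ ∘ j) ∘ t`
  have comps : ∀ {A : Type} [CommRing A] [Algebra k A] (φ : T →ₐ[k] A),
      (φ.comp j).comp 𝓗.s = (Algebra.ofId k A).comp x := by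
    intro A _ _ φ
    ext r
    have : j (𝓗.s r) = algebraMap k T (x r) := by
      simpa [Algebra.ofId_apply] using DFunLike.congr_fun hjs r
    simp [AlgHom.comp_apply, this, Algebra.ofId_apply]
  have compt : ∀ {A : Type} [CommRing A] [Algebra k A] (φ : T →ₐ[k] A),
      (φ.comp j).comp 𝓗.t = (Algebra.ofId k A).comp x := by
    intro A _ _ φ
    ext r
    have : j (𝓗.t r) = algebraMap k T (x r) := by
      simpa [Algebra.ofId_apply] using DFunLike.congr_fun hjt r
    simp [AlgHom.comp_apply, this, Algebra.ofId_apply]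
  have hjs' : ∀ r, j (𝓗.s r) = algebraMap k T (x r) := by
    intro r; simpa [Algebra.ofId_apply] using DFunLike.congr_fun hjs r
  have hjt' : ∀ r, j (𝓗.t r) = algebraMap k T (x r) := by
    intro r; simpa [Algebra.ofId_apply] using DFunLike.congr_fun hjt r
  -- the two inclusions of `T` into `T ⊗ T`
  let inl : T →ₐ[k] TensorProduct k T T := Algebra.TensorProduct.includeLeft
  let inr : T →ₐ[k] TensorProduct k T T := Algebra.TensorProduct.includeRight.restrictScalars k
  have hc0 : (inl.comp j).comp 𝓗.s = (inr.comp j).comp 𝓗.t := (comps inl).trans (compt inr).symm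
  -- `L : H2 → T ⊗ T`, the map through which the comultiplication of `T` will factor
  let L : 𝓗.H2 →ₐ[k] TensorProduct k T T := 𝓗.lift (inl.comp j) (inr.comp j) hc0
  have hL1 : ∀ a : H, L (𝓗.i₁ a) = inl (j a) := by
    intro a; simpa [AlgHom.comp_apply] using DFunLike.congr_fun (𝓗.lift_comp_i₁ _ _ hc0) a
  have hL2 : ∀ a : H, L (𝓗.i₂ a) = inr (j a) := by
    intro a; simpa [AlgHom.comp_apply] using DFunLike.congr_fun (𝓗.lift_comp_i₂ _ _ hc0) a
  let D : H →ₐ[k] TensorProduct k T T := L.comp 𝓗.Δ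
  have hDs : D.comp 𝓗.s = (Algebra.ofId k (TensorProduct k T T)).comp x := by
    show (L.comp 𝓗.Δ).comp 𝓗.s = _
    rw [AlgHom.comp_assoc, 𝓗.Δ_comp_s, ← AlgHom.comp_assoc]
    rw [show L.comp 𝓗.i₂ = inr.comp j from 𝓗.lift_comp_i₂ _ _ hc0]
    exact comps inr
  have hDt : D.comp 𝓗.t = (Algebra.ofId k (TensorProduct k T T)).comp x := by
    show (L.comp 𝓗.Δ).comp 𝓗.t = _
    rw [AlgHom.comp_assoc, 𝓗.Δ_comp_t, ← AlgHom.comp_assoc]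
    rw [show L.comp 𝓗.i₁ = inl.comp j from 𝓗.lift_comp_i₁ _ _ hc0]
    exact compt inl
  -- the comultiplication
  obtain ⟨comul, hcomul, -⟩ := huniv (TensorProduct k T T) D hDs hDt
  have hcomul' : ∀ a : H, comul (j a) = L (𝓗.Δ a) := by
    intro a; simpa [AlgHom.comp_apply, D] using DFunLike.congr_fun hcomul a
  -- the counit
  have hεs : (x.comp 𝓗.ε).comp 𝓗.s = (Algebra.ofId k k).comp x := by
    ext r
    have : 𝓗.ε (𝓗.s r) = r := by simpa using DFunLike.congr_fun 𝓗.counit_s r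
    simp [AlgHom.comp_apply, this, Algebra.ofId_apply]
  have hεt : (x.comp 𝓗.ε).comp 𝓗.t = (Algebra.ofId k k).comp x := by
    ext r
    have : 𝓗.ε (𝓗.t r) = r := by simpa using DFunLike.congr_fun 𝓗.counit_t r
    simp [AlgHom.comp_apply, this, Algebra.ofId_apply]
  obtain ⟨counit, hcounit, -⟩ := huniv k (x.comp 𝓗.ε) hεs hεt
  have hcounit' : ∀ a : H, counit (j a) = x (𝓗.ε a) := by
    intro a; simpa [AlgHom.comp_apply] using DFunLike.congr_fun hcounit a
  -- the antipode
  have hSs : (j.comp 𝓗.antipode).comp 𝓗.s = (Algebra.ofId k T).comp x := by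
    rw [AlgHom.comp_assoc, 𝓗.antipode_s]; exact hjt
  have hSt : (j.comp 𝓗.antipode).comp 𝓗.t = (Algebra.ofId k T).comp x := by
    rw [AlgHom.comp_assoc, 𝓗.antipode_t]; exact hjs
  obtain ⟨antip, hantip, -⟩ := huniv T (j.comp 𝓗.antipode) hSs hSt
  have hantip' : ∀ a : H, antip (j a) = j (𝓗.antipode a) := by
    intro a; simpa [AlgHom.comp_apply] using DFunLike.congr_fun hantip a
  refine ⟨comul, counit, antip, ?_, ?_, ?_, ?_, ?_, hcounit, hantip, fun hc => hcomul⟩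
  · -- coassociativity
    let inl3 : T →ₐ[k] (TensorProduct k T (TensorProduct k T T)) := Algebra.TensorProduct.includeLeft
    let inr3 : TensorProduct k T T →ₐ[k] (TensorProduct k T (TensorProduct k T T)) := Algebra.TensorProduct.includeRight
    let u : H →ₐ[k] (TensorProduct k T (TensorProduct k T T)) := inl3.comp j
    let v : H →ₐ[k] (TensorProduct k T (TensorProduct k T T)) := (inr3.comp inl).comp j
    let w : H →ₐ[k] (TensorProduct k T (TensorProduct k T T)) := (inr3.comp inr).comp j
    have huv : u.comp 𝓗.s = v.comp 𝓗.t := (comps inl3).trans (compt (inr3.comp inl)).symm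
    have hvw : v.comp 𝓗.s = w.comp 𝓗.t :=
      (comps (inr3.comp inl)).trans (compt (inr3.comp inr)).symm
    let M : 𝓗.H2 →ₐ[k] (TensorProduct k T (TensorProduct k T T)) := 𝓗.lift u v huv
    let N : 𝓗.H2 →ₐ[k] (TensorProduct k T (TensorProduct k T T)) := 𝓗.lift v w hvw
    let Ψ : TensorProduct k T T →ₐ[k] (TensorProduct k T (TensorProduct k T T)) := Algebra.TensorProduct.map (AlgHom.id k T) inl
    have hM : Ψ.comp L = M := by
      refine 𝓗.lift_unique u v huv _ ?_ ?_
      · ext a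
        simp [AlgHom.comp_apply, hL1, inl, inl3, Ψ, u, Algebra.TensorProduct.map_tmul, Algebra.TensorProduct.includeLeft_apply, Algebra.TensorProduct.includeRight_apply, map_one]
      · ext a
        simp [AlgHom.comp_apply, hL2, inl, inr, inr3, Ψ, v, Algebra.TensorProduct.map_tmul, Algebra.TensorProduct.includeLeft_apply, Algebra.TensorProduct.includeRight_apply, map_one]
    have hN : inr3.comp L = N := by
      refine 𝓗.lift_unique v w hvw _ ?_ ?_
      · ext a
        simp [AlgHom.comp_apply, hL1, inl, inr3, v, Algebra.TensorProduct.map_tmul, Algebra.TensorProduct.includeLeft_apply, Algebra.TensorProduct.includeRight_apply, map_one]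
      · ext a
        simp [AlgHom.comp_apply, hL2, inr, inr3, w, Algebra.TensorProduct.map_tmul, Algebra.TensorProduct.includeLeft_apply, Algebra.TensorProduct.includeRight_apply, map_one]
    have h₁ : ((M.comp 𝓗.Δ)).comp 𝓗.s = w.comp 𝓗.t := by
      rw [AlgHom.comp_assoc, 𝓗.Δ_comp_s, ← AlgHom.comp_assoc]
      rw [show M.comp 𝓗.i₂ = v from 𝓗.lift_comp_i₂ _ _ huv]
      exact (comps (inr3.comp inl)).trans (compt (inr3.comp inr)).symm
    have h₂ : u.comp 𝓗.s = ((N.comp 𝓗.Δ)).comp 𝓗.t := by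
      rw [show (N.comp 𝓗.Δ).comp 𝓗.t = N.comp (𝓗.Δ.comp 𝓗.t) from AlgHom.comp_assoc _ _ _,
        𝓗.Δ_comp_t, ← AlgHom.comp_assoc,
        show N.comp 𝓗.i₁ = v from 𝓗.lift_comp_i₁ _ _ hvw]
      exact huv
    have hco := 𝓗.coassoc u v w huv hvw h₁ h₂
    have hassoc : ∀ z : TensorProduct k T T,
        (Algebra.TensorProduct.assoc k k k T T T) (z ⊗ₜ[k] (1 : T)) = Ψ z := by
      intro z
      induction z using TensorProduct.induction_on with
      | zero => simp [TensorProduct.zero_tmul]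
      | tmul a b => simp [Algebra.TensorProduct.assoc_tmul, Ψ, inl, Algebra.TensorProduct.map_tmul, Algebra.TensorProduct.includeLeft_apply, Algebra.TensorProduct.includeRight_apply, map_one]
      | add z₁ z₂ ih₁ ih₂ => simp [TensorProduct.add_tmul, ih₁, ih₂]
    have hF : (Algebra.TensorProduct.assoc k k k T T T : _ ≃ₐ[k] _).toAlgHom.comp
        ((Algebra.TensorProduct.map comul (AlgHom.id k T)).comp L) =
        𝓗.lift (M.comp 𝓗.Δ) w h₁ := by
      refine 𝓗.lift_unique _ _ h₁ _ ?_ ?_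
      · ext a
        have hMa : M (𝓗.Δ a) = Ψ (L (𝓗.Δ a)) :=
          (DFunLike.congr_fun hM (𝓗.Δ a)).symm
        simp only [AlgHom.comp_apply, AlgEquiv.toAlgHom_eq_coe, AlgHom.coe_coe]
        rw [hL1, hMa]
        show (Algebra.TensorProduct.assoc k k k T T T)
            ((Algebra.TensorProduct.map comul (AlgHom.id k T)) (inl (j a))) = _
        have : (Algebra.TensorProduct.map comul (AlgHom.id k T)) (inl (j a)) =
            comul (j a) ⊗ₜ[k] (1 : T) := by
          simp [inl]
        rw [this, hassoc, hcomul']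
      · ext a
        simp only [AlgHom.comp_apply, AlgEquiv.toAlgHom_eq_coe, AlgHom.coe_coe]
        rw [hL2]
        have : (Algebra.TensorProduct.map comul (AlgHom.id k T)) (inr (j a)) =
            ((1 : T) ⊗ₜ[k] (1 : T)) ⊗ₜ[k] (j a) := by
          simp [inr, Algebra.TensorProduct.one_def]
        show (Algebra.TensorProduct.assoc k k k T T T)
            ((Algebra.TensorProduct.map comul (AlgHom.id k T)) (inr (j a))) = w a
        rw [this, Algebra.TensorProduct.assoc_tmul]
        simp [w, inr3, inr, Algebra.TensorProduct.one_def, Algebra.TensorProduct.map_tmul, Algebra.TensorProduct.includeLeft_apply, Algebra.TensorProduct.includeRight_apply, map_one]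
    have hG : (Algebra.TensorProduct.map (AlgHom.id k T) comul).comp L =
        𝓗.lift u (N.comp 𝓗.Δ) h₂ := by
      refine 𝓗.lift_unique _ _ h₂ _ ?_ ?_
      · ext a
        simp only [AlgHom.comp_apply]
        rw [hL1]
        simp [inl, inl3, u, Algebra.TensorProduct.map_tmul, Algebra.TensorProduct.includeLeft_apply, Algebra.TensorProduct.includeRight_apply, map_one]
      · ext a
        simp only [AlgHom.comp_apply]
        rw [hL2]
        have hNa : N (𝓗.Δ a) = inr3 (L (𝓗.Δ a)) := (DFunLike.congr_fun hN (𝓗.Δ a)).symm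
        rw [hNa, ← hcomul']
        simp [inr, inr3, Algebra.TensorProduct.map_tmul, Algebra.TensorProduct.includeLeft_apply, Algebra.TensorProduct.includeRight_apply, map_one]
    apply Tj_ext
    ext a
    have e1 := DFunLike.congr_fun hF (𝓗.Δ a)
    have e2 := DFunLike.congr_fun hG (𝓗.Δ a)
    have e3 := DFunLike.congr_fun hco a
    simp only [AlgHom.comp_apply, AlgEquiv.toAlgHom_eq_coe, AlgHom.coe_coe] at e1 e2 e3 ⊢
    rw [hcomul', e1, e3, ← e2]
  · -- left counit law
    have h0 : (𝓗.t.comp 𝓗.ε).comp 𝓗.s = (AlgHom.id k H).comp 𝓗.t := by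
      rw [AlgHom.comp_assoc, 𝓗.counit_s, AlgHom.comp_id, AlgHom.id_comp]
    have hK := 𝓗.counit_left h0
    have hPK : ((Algebra.TensorProduct.lid k T : _ ≃ₐ[k] _).toAlgHom.comp
        ((Algebra.TensorProduct.map counit (AlgHom.id k T)).comp L)) =
        j.comp (𝓗.lift (𝓗.t.comp 𝓗.ε) (AlgHom.id k H) h0) := by
      refine H2_ext _ _ ?_ ?_
      · ext a
        have h1 : (𝓗.lift (𝓗.t.comp 𝓗.ε) (AlgHom.id k H) h0) (𝓗.i₁ a) = 𝓗.t (𝓗.ε a) := by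
          simpa [AlgHom.comp_apply] using DFunLike.congr_fun (𝓗.lift_comp_i₁ _ _ h0) a
        simp only [AlgHom.comp_apply, AlgEquiv.toAlgHom_eq_coe, AlgHom.coe_coe]
        rw [hL1, h1, hjt']
        simp [inl, hcounit', Algebra.algebraMap_eq_smul_one]
      · ext a
        have h1 : (𝓗.lift (𝓗.t.comp 𝓗.ε) (AlgHom.id k H) h0) (𝓗.i₂ a) = a := by
          simpa [AlgHom.comp_apply] using DFunLike.congr_fun (𝓗.lift_comp_i₂ _ _ h0) a
        simp only [AlgHom.comp_apply, AlgEquiv.toAlgHom_eq_coe, AlgHom.coe_coe]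
        rw [hL2, h1]
        simp [inr]
    apply Tj_ext
    ext a
    have e1 := DFunLike.congr_fun hPK (𝓗.Δ a)
    have e2 := DFunLike.congr_fun hK a
    simp only [AlgHom.comp_apply, AlgEquiv.toAlgHom_eq_coe, AlgHom.coe_coe,
      AlgHom.coe_id, id_eq] at e1 e2 ⊢
    rw [hcomul', e1, e2]
  · -- right counit law
    have h0 : (AlgHom.id k H).comp 𝓗.s = (𝓗.s.comp 𝓗.ε).comp 𝓗.t := by
      rw [AlgHom.comp_assoc, 𝓗.counit_t, AlgHom.comp_id, AlgHom.id_comp]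
    have hK := 𝓗.counit_right h0
    have hPK : ((Algebra.TensorProduct.rid k k T : _ ≃ₐ[k] _).toAlgHom.comp
        ((Algebra.TensorProduct.map (AlgHom.id k T) counit).comp L)) =
        j.comp (𝓗.lift (AlgHom.id k H) (𝓗.s.comp 𝓗.ε) h0) := by
      refine H2_ext _ _ ?_ ?_
      · ext a
        have h1 : (𝓗.lift (AlgHom.id k H) (𝓗.s.comp 𝓗.ε) h0) (𝓗.i₁ a) = a := by
          simpa [AlgHom.comp_apply] using DFunLike.congr_fun (𝓗.lift_comp_i₁ _ _ h0) a
        simp only [AlgHom.comp_apply, AlgEquiv.toAlgHom_eq_coe, AlgHom.coe_coe]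
        rw [hL1, h1]
        simp [inl]
      · ext a
        have h1 : (𝓗.lift (AlgHom.id k H) (𝓗.s.comp 𝓗.ε) h0) (𝓗.i₂ a) = 𝓗.s (𝓗.ε a) := by
          simpa [AlgHom.comp_apply] using DFunLike.congr_fun (𝓗.lift_comp_i₂ _ _ h0) a
        simp only [AlgHom.comp_apply, AlgEquiv.toAlgHom_eq_coe, AlgHom.coe_coe]
        rw [hL2, h1, hjs']
        simp [inr, hcounit', Algebra.algebraMap_eq_smul_one]
    apply Tj_ext
    ext a
    have e1 := DFunLike.congr_fun hPK (𝓗.Δ a)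
    have e2 := DFunLike.congr_fun hK a
    simp only [AlgHom.comp_apply, AlgEquiv.toAlgHom_eq_coe, AlgHom.coe_coe,
      AlgHom.coe_id, id_eq] at e1 e2 ⊢
    rw [hcomul', e1, e2]
  · -- left antipode identity
    have h0 : 𝓗.antipode.comp 𝓗.s = (AlgHom.id k H).comp 𝓗.t := by
      rw [𝓗.antipode_s, AlgHom.id_comp]
    have hK := 𝓗.antipode_left h0
    have hPK : ((Algebra.TensorProduct.lmul' k).comp
        ((Algebra.TensorProduct.map antip (AlgHom.id k T)).comp L)) =
        j.comp (𝓗.lift 𝓗.antipode (AlgHom.id k H) h0) := by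
      refine H2_ext _ _ ?_ ?_
      · ext a
        have h1 : (𝓗.lift 𝓗.antipode (AlgHom.id k H) h0) (𝓗.i₁ a) = 𝓗.antipode a := by
          simpa [AlgHom.comp_apply] using DFunLike.congr_fun (𝓗.lift_comp_i₁ _ _ h0) a
        simp only [AlgHom.comp_apply]
        rw [hL1, h1, ← hantip']
        simp [inl, Algebra.TensorProduct.lmul'_apply_tmul]
      · ext a
        have h1 : (𝓗.lift 𝓗.antipode (AlgHom.id k H) h0) (𝓗.i₂ a) = a := by
          simpa [AlgHom.comp_apply] using DFunLike.congr_fun (𝓗.lift_comp_i₂ _ _ h0) a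
        simp only [AlgHom.comp_apply]
        rw [hL2, h1]
        simp [inr, Algebra.TensorProduct.lmul'_apply_tmul]
    apply Tj_ext
    ext a
    have e1 := DFunLike.congr_fun hPK (𝓗.Δ a)
    have e2 := DFunLike.congr_fun hK a
    simp only [AlgHom.comp_apply] at e1 e2 ⊢
    rw [hcomul', e1, e2, hjs']
    simp [Algebra.ofId_apply, hcounit']
  · -- right antipode identity
    have h0 : (AlgHom.id k H).comp 𝓗.s = 𝓗.antipode.comp 𝓗.t := by
      rw [𝓗.antipode_t, AlgHom.id_comp]
    have hK := 𝓗.antipode_right h0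
    have hPK : ((Algebra.TensorProduct.lmul' k).comp
        ((Algebra.TensorProduct.map (AlgHom.id k T) antip).comp L)) =
        j.comp (𝓗.lift (AlgHom.id k H) 𝓗.antipode h0) := by
      refine H2_ext _ _ ?_ ?_
      · ext a
        have h1 : (𝓗.lift (AlgHom.id k H) 𝓗.antipode h0) (𝓗.i₁ a) = a := by
          simpa [AlgHom.comp_apply] using DFunLike.congr_fun (𝓗.lift_comp_i₁ _ _ h0) a
        simp only [AlgHom.comp_apply]
        rw [hL1, h1]
        simp [inl, Algebra.TensorProduct.lmul'_apply_tmul]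
      · ext a
        have h1 : (𝓗.lift (AlgHom.id k H) 𝓗.antipode h0) (𝓗.i₂ a) = 𝓗.antipode a := by
          simpa [AlgHom.comp_apply] using DFunLike.congr_fun (𝓗.lift_comp_i₂ _ _ h0) a
        simp only [AlgHom.comp_apply]
        rw [hL2, h1, ← hantip']
        simp [inr, Algebra.TensorProduct.lmul'_apply_tmul]
    apply Tj_ext
    ext a
    have e1 := DFunLike.congr_fun hPK (𝓗.Δ a)
    have e2 := DFunLike.congr_fun hK a
    simp only [AlgHom.comp_apply] at e1 e2 ⊢
    rw [hcomul', e1, e2, hjt']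
    simp [Algebra.ofId_apply, hcounit']
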